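/- Let H and V be real Hilbert spaces, let i : H → V be an injective compact continuous linear map with dense range, let a : H × H → ℝ be a continuous symmetric bilinear form, and suppose there exist λ > 0 and α > 0 with a(x,x) + λ⟨i x, i x⟩_V ≥ α‖x‖_H² for all x ∈ H. Then there exists a compact continuous linear operator T : V → V such that: (i) for every v ∈ V there is a unique x_v ∈ H with T v = i x_v and a(x_v, y) + λ⟨i x_v, i y⟩_V = ⟨v, i y⟩_V for all y ∈ H; (ii) T is symmetric: ⟨T v, w⟩_V = ⟨v, T w⟩_V for all v, w ∈ V; (iii) T is positive: ⟨T v, v⟩_V ≥ 0 for all v ∈ V; (iv) T is injective. -/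

import Mathlib

open ContinuousLinearMap

/-- Appendix A: existence of the compact, symmetric, positive, injective resolvent-type
operator `T` associated to a continuous symmetric bilinear form `a` on `H` that is
coercive after adding `λ` times the scalar product of `V`, where `H` embeds compactly and
densely into `V`. -/
theorem exists_compact_resolvent_operator
    {H V : Type*}
    [NormedAddCommGroup H] [InnerProductSpace ℝ H] [CompleteSpace H]
    [NormedAddCommGroup V] [InnerProductSpace ℝ V] [CompleteSpace V]
    (i : H →L[ℝ] V) (hinj : Function.Injective i)
    (hcomp : IsCompactOperator (⇑i)) (hdense : DenseRange (⇑i))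
    (a : H →L[ℝ] H →L[ℝ] ℝ) (hsymm : ∀ x y : H, a x y = a y x)
    (lam α : ℝ) (hlam : 0 < lam) (hα : 0 < α)
    (hcoer : ∀ x : H, α * ‖x‖ ^ 2 ≤ a x x + lam * (inner ℝ (i x) (i x) : ℝ)) :
    ∃ T : V →L[ℝ] V, IsCompactOperator (⇑T) ∧
      (∀ v : V, ∃! x : H, T v = i x ∧
        ∀ y : H, a x y + lam * (inner ℝ (i x) (i y) : ℝ) = (inner ℝ v (i y) : ℝ)) ∧
      (∀ v w : V, (inner ℝ (T v) w : ℝ) = (inner ℝ v (T w) : ℝ)) ∧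
      (∀ v : V, 0 ≤ (inner ℝ (T v) v : ℝ)) ∧
      Function.Injective T := by
  -- the bilinear form b x y = a x y + lam ⟪i x, i y⟫
  set b : H →L[ℝ] H →L[ℝ] ℝ :=
    a + lam • ((innerSL ℝ).bilinearComp i i : H →L[ℝ] H →L[ℝ] ℝ) with hb
  have hbapp : ∀ x y : H, b x y = a x y + lam * (inner ℝ (i x) (i y) : ℝ) := by
    intro x y; simp [hb]
  have hbsymm : ∀ x y : H, b x y = b y x := by
    intro x y
    rw [hbapp, hbapp, hsymm, real_inner_comm]
  have hbcoer : IsCoercive b := by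
    refine ⟨α, hα, fun u => ?_⟩
    rw [hbapp]
    calc α * ‖u‖ * ‖u‖ = α * ‖u‖ ^ 2 := by ring
    _ ≤ _ := hcoer u
  set E := hbcoer.continuousLinearEquivOfBilin with hE
  -- solution map: x v := E.symm (adjoint i v)
  set S : V →L[ℝ] H := (E.symm : H →L[ℝ] H).comp (ContinuousLinearMap.adjoint i)
    with hS
  have hSkey : ∀ (v : V) (y : H), b (S v) y = (inner ℝ v (i y) : ℝ) := by
    intro v y
    have h1 := hbcoer.continuousLinearEquivOfBilin_apply (S v) y
    rw [← h1]
    have h2 : E (S v) = ContinuousLinearMap.adjoint i v := by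
      simp [hS, hE]
    rw [hE] at h2
    rw [h2, ContinuousLinearMap.adjoint_inner_left]
  set T : V →L[ℝ] V := i.comp S with hT
  have hTv : ∀ v : V, T v = i (S v) := fun v => rfl
  have hbnd : ∀ v : V, ∀ y : H, a (S v) y + lam * (inner ℝ (i (S v)) (i y) : ℝ)
      = (inner ℝ v (i y) : ℝ) := by
    intro v y; rw [← hbapp]; exact hSkey v y
  refine ⟨T, ?_, ?_, ?_, ?_, ?_⟩
  · exact hcomp.comp_clm S
  · intro v
    refine ⟨S v, ⟨rfl, hbnd v⟩, ?_⟩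
    rintro x ⟨hx, -⟩
    exact hinj ((hTv v).symm.trans hx).symm
  · intro v w
    have h1 : (inner ℝ (T v) w : ℝ) = b (S w) (S v) := by
      rw [hTv, real_inner_comm, ← hSkey w (S v)]
    have h2 : (inner ℝ v (T w) : ℝ) = b (S v) (S w) := by
      rw [hTv, ← hSkey v (S w)]
    rw [h1, h2, hbsymm]
  · intro v
    have h : (inner ℝ (T v) v : ℝ) = b (S v) (S v) := by
      rw [hTv, real_inner_comm, ← hSkey v (S v)]
    rw [h]
    calc (0 : ℝ) ≤ α * ‖S v‖ ^ 2 := by positivity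
    _ ≤ a (S v) (S v) + lam * (inner ℝ (i (S v)) (i (S v)) : ℝ) := hcoer (S v)
    _ = b (S v) (S v) := (hbapp _ _).symm
  · intro v w hvw
    have hxy : S v = S w := hinj hvw
    have hperp : Set.EqOn (fun z : V => (inner ℝ (v - w) z : ℝ)) (fun _ => (0 : ℝ))
        (Set.range (⇑i)) := by
      rintro z ⟨y, rfl⟩
      simp only
      rw [inner_sub_left, ← hSkey v y, ← hSkey w y, hxy, sub_self]
    have hall : ∀ z : V, (inner ℝ (v - w) z : ℝ) = 0 := fun z =>
      congrFun (Continuous.ext_on hdense (continuous_const.inner continuous_id)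
        continuous_const hperp) z
    have h0 : v - w = 0 := by
      have := hall (v - w)
      exact inner_self_eq_zero.mp this
    exact sub_eq_zero.mp h0
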